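/- Let m, n, k be positive integers with k ≤ n and let X ∈ M_m ⊗ M_n. Then the supremum, over all N ∈ ℕ and all families A_1,…,A_N, B_1,…,B_N ∈ M_{k,n} of k×n complex matrices satisfying ‖∑_{i=1}^N A_i A_i^*‖ ≤ 1 and ‖∑_{i=1}^N B_i B_i^*‖ ≤ 1, of ‖∑_{i=1}^N (I_m ⊗ A_i) X (I_m ⊗ B_i^*)‖, equals the S(k)-norm ‖X‖_{S(k)}. (This is Theorem 3.1: the k-minimal operator space norm on M_m(M_n) equals the S(k)-norm.) -/

import Mathlib

open scoped ComplexOrder Kronecker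
open Matrix

noncomputable section

/-- The standard inner product `⟨v, w⟩ = ∑ conj(vᵢ) wᵢ` on `I → ℂ`. -/
def inprod {I : Type*} [Fintype I] (v w : I → ℂ) : ℂ :=
  ∑ i, (starRingEnd ℂ) (v i) * w i

/-- `v` is a unit vector. -/
def UnitVec {I : Type*} [Fintype I] (v : I → ℂ) : Prop :=
  inprod v v = 1

/-- The Schmidt rank of a vector in `ℂ^I ⊗ ℂ^J`, i.e. the rank of the associated
`I × J` coefficient matrix. -/
noncomputable def SchmidtRank {I J : Type*} [Fintype I] [Fintype J] (v : I × J → ℂ) : ℕ :=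
  (Matrix.of fun i j => v (i, j)).rank

/-- The operator norm (largest singular value) of a matrix, as
`sup { |⟨v, A w⟩| : v, w unit vectors }`. -/
noncomputable def opNorm {I J : Type*} [Fintype I] [Fintype J] (A : Matrix I J ℂ) : ℝ :=
  sSup { t : ℝ | ∃ v w, UnitVec v ∧ UnitVec w ∧ t = ‖inprod v (A.mulVec w)‖ }

/-- The `S(k)`-norm of `X ∈ M_I ⊗ M_J`. -/
noncomputable def SNorm {I J : Type*} [Fintype I] [Fintype J] (k : ℕ)
    (X : Matrix (I × J) (I × J) ℂ) : ℝ :=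
  sSup { t : ℝ | ∃ v w : I × J → ℂ, UnitVec v ∧ UnitVec w ∧
    SchmidtRank v ≤ k ∧ SchmidtRank w ≤ k ∧
    t = ‖inprod v (X.mulVec w)‖ }

/-- `X` is a `k`-block positive (Hermitian) operator: `⟨v, X v⟩ ≥ 0` for every
vector of Schmidt rank at most `k`. -/
def kBlockPos {I J : Type*} [Fintype I] [Fintype J] (k : ℕ)
    (X : Matrix (I × J) (I × J) ℂ) : Prop :=
  X.IsHermitian ∧ ∀ v : I × J → ℂ, SchmidtRank v ≤ k → 0 ≤ inprod v (X.mulVec v)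

/-- `ρ` has Schmidt number at most `k` (in particular it is positive semidefinite):
it is a finite nonnegative combination of rank-one projections onto vectors of
Schmidt rank at most `k`. -/
def SchmidtNumberLE {I J : Type*} [Fintype I] [Fintype J] (k : ℕ)
    (ρ : Matrix (I × J) (I × J) ℂ) : Prop :=
  ∃ (N : ℕ) (c : Fin N → ℝ) (v : Fin N → (I × J → ℂ)),
    (∀ i, 0 ≤ c i) ∧ (∀ i, SchmidtRank (v i) ≤ k) ∧
    ρ = ∑ i, (c i : ℂ) • Matrix.vecMulVec (v i) (star (v i))

/-- `id_I ⊗ Φ` : the map applying `Φ` to the second tensor factor. -/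
noncomputable def tensorId {I : Type*} [Fintype I] {a b : ℕ}
    (Φ : Matrix (Fin a) (Fin a) ℂ →ₗ[ℂ] Matrix (Fin b) (Fin b) ℂ)
    (X : Matrix (I × Fin a) (I × Fin a) ℂ) : Matrix (I × Fin b) (I × Fin b) ℂ :=
  Matrix.of fun p q => Φ (Matrix.of fun s t => X (p.1, s) (q.1, t)) p.2 q.2

/-- The trace norm `‖X‖_tr = Tr √(X^* X)`. -/
noncomputable def trNorm {I : Type*} [Fintype I] [DecidableEq I] (X : Matrix I I ℂ) : ℝ :=
  (((Matrix.posSemidef_conjTranspose_mul_self X).1.eigenvectorUnitary : Matrix I I ℂ) *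
    diagonal (((↑) : ℝ → ℂ) ∘ (√·) ∘ (Matrix.posSemidef_conjTranspose_mul_self X).1.eigenvalues) *
    (star (Matrix.posSemidef_conjTranspose_mul_self X).1.eigenvectorUnitary : Matrix I I ℂ)).trace.re

end
set_option linter.unusedSectionVars false
section AuxKMinimal
noncomputable section
variable {I J : Type*} [Fintype I] [Fintype J]

def toEuc (v : I → ℂ) : EuclideanSpace ℂ I := WithLp.toLp 2 v

lemma inprod_eq_inner (v w : I → ℂ) :
    inprod v w = @inner ℂ (EuclideanSpace ℂ I) _ (toEuc v) (toEuc w) := by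
  simp [inprod, PiLp.inner_apply, RCLike.inner_apply, toEuc, mul_comm]

lemma unitVec_iff (v : I → ℂ) : UnitVec v ↔ ‖toEuc v‖ = 1 := by
  rw [UnitVec, inprod_eq_inner, @inner_self_eq_norm_sq_to_K ℂ]
  constructor
  · intro h
    have h2 : ((‖toEuc v‖ ^ 2 : ℝ) : ℂ) = 1 := by push_cast; exact h
    have h3 : ‖toEuc v‖ ^ 2 = 1 := by exact_mod_cast h2
    nlinarith [norm_nonneg (toEuc v)]
  · intro h; rw [h]; norm_num

lemma abs_inprod_le (v w : I → ℂ) :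
    ‖inprod v w‖ ≤ ‖toEuc v‖ * ‖toEuc w‖ := by
  rw [inprod_eq_inner]
  exact norm_inner_le_norm _ _

lemma unitVec_entry_le {v : I → ℂ} (hv : UnitVec v) (i : I) : ‖v i‖ ≤ 1 := by
  have h : ∑ j, Complex.normSq (v j) = 1 := by
    have := hv
    rw [UnitVec, inprod] at this
    have h2 : (((∑ j, Complex.normSq (v j)) : ℝ) : ℂ) = 1 := by
      push_cast
      rw [← this]
      exact Finset.sum_congr rfl fun j _ => by
        rw [Complex.normSq_eq_conj_mul_self]
    exact_mod_cast h2
  have h1 : Complex.normSq (v i) ≤ 1 := by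
    rw [← h]
    exact Finset.single_le_sum (fun j _ => Complex.normSq_nonneg _) (Finset.mem_univ i)
  have := Complex.sq_norm (v i)
  nlinarith [norm_nonneg (v i)]

lemma abs_inprod_mulVec_le_of_unit {A : Matrix I J ℂ} {v : I → ℂ} {w : J → ℂ}
    (hv : UnitVec v) (hw : UnitVec w) :
    ‖inprod v (A.mulVec w)‖ ≤ ∑ i, ∑ j, ‖A i j‖ := by
  rw [inprod]
  refine (norm_sum_le _ _).trans ?_
  refine Finset.sum_le_sum fun i _ => ?_
  rw [norm_mul, mulVec, dotProduct]
  calc ‖(starRingEnd ℂ) (v i)‖ * ‖∑ j, A i j * w j‖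
      ≤ 1 * ‖∑ j, A i j * w j‖ := by
        refine mul_le_mul_of_nonneg_right ?_ (norm_nonneg _)
        rw [Complex.norm_conj]; exact unitVec_entry_le hv i
    _ = ‖∑ j, A i j * w j‖ := one_mul _
    _ ≤ ∑ j, ‖A i j * w j‖ := norm_sum_le _ _
    _ ≤ ∑ j, ‖A i j‖ := by
        refine Finset.sum_le_sum fun j _ => ?_
        rw [norm_mul]
        calc ‖A i j‖ * ‖w j‖ ≤ ‖A i j‖ * 1 :=
            mul_le_mul_of_nonneg_left (unitVec_entry_le hw j) (norm_nonneg _)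
          _ = _ := mul_one _

lemma opNorm_bddAbove (A : Matrix I J ℂ) :
    BddAbove { t : ℝ | ∃ v w, UnitVec v ∧ UnitVec w ∧ t = ‖inprod v (A.mulVec w)‖ } := by
  refine ⟨∑ i, ∑ j, ‖A i j‖, fun t ht => ?_⟩
  obtain ⟨v, w, hv, hw, rfl⟩ := ht
  exact abs_inprod_mulVec_le_of_unit hv hw

lemma opNorm_nonneg (A : Matrix I J ℂ) : 0 ≤ opNorm A :=
  Real.sSup_nonneg (fun t ht => by obtain ⟨v, w, _, _, rfl⟩ := ht; positivity)

lemma SNorm_nonneg (k : ℕ) (X : Matrix (I × J) (I × J) ℂ) : 0 ≤ SNorm k X :=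
  Real.sSup_nonneg (fun t ht => by obtain ⟨v, w, _, _, _, _, rfl⟩ := ht; positivity)

lemma SNorm_bddAbove (k : ℕ) (X : Matrix (I × J) (I × J) ℂ) :
    BddAbove { t : ℝ | ∃ v w : I × J → ℂ, UnitVec v ∧ UnitVec w ∧
      SchmidtRank v ≤ k ∧ SchmidtRank w ≤ k ∧
      t = ‖inprod v (X.mulVec w)‖ } := by
  refine ⟨∑ p, ∑ q, ‖X p q‖, fun t ht => ?_⟩
  obtain ⟨v, w, hv, hw, _, _, rfl⟩ := ht
  exact abs_inprod_mulVec_le_of_unit hv hw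

lemma opNorm_le {A : Matrix I J ℂ} {c : ℝ} (hc : 0 ≤ c)
    (h : ∀ v w, UnitVec v → UnitVec w → ‖inprod v (A.mulVec w)‖ ≤ c) :
    opNorm A ≤ c :=
  Real.sSup_le (fun t ht => by obtain ⟨v, w, hv, hw, rfl⟩ := ht; exact h v w hv hw) hc


lemma toEuc_smul (c : ℂ) (v : I → ℂ) : toEuc (c • v) = c • toEuc v := rfl

lemma toEuc_eq_zero {v : I → ℂ} : toEuc v = 0 ↔ v = 0 := by simp [toEuc]

lemma unitVec_normalize {v : I → ℂ} (hv : v ≠ 0) :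
    UnitVec ((((‖toEuc v‖)⁻¹ : ℝ) : ℂ) • v) := by
  rw [unitVec_iff, toEuc_smul, norm_smul]
  have h0 : ‖toEuc v‖ ≠ 0 := by
    simp only [ne_eq, norm_eq_zero]
    exact fun h => hv (toEuc_eq_zero.mp h)
  simp [abs_of_nonneg (inv_nonneg.mpr (norm_nonneg _)), inv_mul_cancel₀ h0]

lemma inprod_smul_left (c : ℂ) (v w : I → ℂ) :
    inprod (c • v) w = (starRingEnd ℂ) c * inprod v w := by
  simp [inprod, Finset.mul_sum, mul_assoc]

lemma inprod_smul_right (c : ℂ) (v w : I → ℂ) :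
    inprod v (c • w) = c * inprod v w := by
  simp only [inprod, Pi.smul_apply, smul_eq_mul, Finset.mul_sum]
  exact Finset.sum_congr rfl fun i _ => by ring

lemma SchmidtRank_smul {c : ℂ} (hc : c ≠ 0) (v : I × J → ℂ) [DecidableEq I]:
    SchmidtRank (c • v) = SchmidtRank v := by
  unfold SchmidtRank
  have h : (Matrix.of fun i j => (c • v) (i, j)) =
      (c • (1 : Matrix I I ℂ)) * (Matrix.of fun i j => v (i, j)) := by
    ext i j
    simp [Matrix.mul_apply, Matrix.one_apply, Finset.mul_sum, mul_ite, ite_mul]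
  rw [h]
  apply Matrix.rank_mul_eq_right_of_isUnit_det
  rw [Matrix.det_smul, Matrix.det_one, mul_one]
  exact (IsUnit.pow _ (Ne.isUnit hc))

lemma abs_inprod_mulVec_le (A : Matrix I J ℂ) (v : I → ℂ) (w : J → ℂ) :
    ‖inprod v (A.mulVec w)‖ ≤ opNorm A * (‖toEuc v‖ * ‖toEuc w‖) := by
  rcases eq_or_ne v 0 with rfl | hv
  · simp only [inprod, Pi.zero_apply, map_zero, zero_mul, Finset.sum_const_zero, map_zero, norm_zero]
    exact mul_nonneg (opNorm_nonneg A) (mul_nonneg (norm_nonneg _) (norm_nonneg _))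
  rcases eq_or_ne w 0 with rfl | hw
  · simp only [Matrix.mulVec_zero, inprod, Pi.zero_apply, mul_zero, Finset.sum_const_zero, map_zero, norm_zero]
    exact mul_nonneg (opNorm_nonneg A) (mul_nonneg (norm_nonneg _) (norm_nonneg _))
  have hv0 : ‖toEuc v‖ ≠ 0 := by simpa [toEuc_eq_zero] using hv
  have hw0 : ‖toEuc w‖ ≠ 0 := by simpa [toEuc_eq_zero] using hw
  have key : ‖inprod ((((‖toEuc v‖)⁻¹ : ℝ) : ℂ) • v)
      (A.mulVec ((((‖toEuc w‖)⁻¹ : ℝ) : ℂ) • w))‖ ≤ opNorm A := by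
    apply le_csSup (opNorm_bddAbove A)
    exact ⟨_, _, unitVec_normalize hv, unitVec_normalize hw, rfl⟩
  rw [Matrix.mulVec_smul, inprod_smul_left, inprod_smul_right, norm_mul, norm_mul] at key
  have habs : ∀ r : ℝ, 0 ≤ r → ‖(starRingEnd ℂ) (r : ℂ)‖ = r := by
    intro r hr; simp [Complex.norm_of_nonneg hr, hr]
  rw [habs _ (inv_nonneg.mpr (norm_nonneg _))] at key
  have habs2 : ‖(((‖toEuc w‖)⁻¹ : ℝ) : ℂ)‖ = (‖toEuc w‖)⁻¹ := by
    simp [Complex.norm_of_nonneg (inv_nonneg.mpr (norm_nonneg _))]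
  rw [habs2] at key
  have hpos : 0 < ‖toEuc v‖ * ‖toEuc w‖ := by
    positivity
  calc ‖inprod v (A.mulVec w)‖
      = (‖toEuc v‖ * ‖toEuc w‖) * ((‖toEuc v‖)⁻¹ * ((‖toEuc w‖)⁻¹ *
          ‖inprod v (A.mulVec w)‖)) := by
        field_simp
    _ ≤ (‖toEuc v‖ * ‖toEuc w‖) * opNorm A := by
        refine mul_le_mul_of_nonneg_left ?_ hpos.le
        calc (‖toEuc v‖)⁻¹ * ((‖toEuc w‖)⁻¹ * ‖inprod v (A.mulVec w)‖)
            = (‖toEuc v‖)⁻¹ * ((‖toEuc w‖)⁻¹ * ‖inprod v (A.mulVec w)‖) := rfl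
          _ ≤ opNorm A := key
    _ = opNorm A * (‖toEuc v‖ * ‖toEuc w‖) := by ring


lemma abs_inprod_mulVec_le_SNorm [DecidableEq I] {k : ℕ} (X : Matrix (I × J) (I × J) ℂ)
    {v w : I × J → ℂ} (hv : SchmidtRank v ≤ k) (hw : SchmidtRank w ≤ k) :
    ‖inprod v (X.mulVec w)‖ ≤ SNorm k X * (‖toEuc v‖ * ‖toEuc w‖) := by
  rcases eq_or_ne v 0 with rfl | hv0
  · simp only [inprod, Pi.zero_apply, map_zero, zero_mul, Finset.sum_const_zero, norm_zero]
    exact mul_nonneg (SNorm_nonneg k X) (mul_nonneg (norm_nonneg _) (norm_nonneg _))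
  rcases eq_or_ne w 0 with rfl | hw0
  · simp only [Matrix.mulVec_zero, inprod, Pi.zero_apply, mul_zero, Finset.sum_const_zero,
      map_zero, norm_zero]
    exact mul_nonneg (SNorm_nonneg k X) (mul_nonneg (norm_nonneg _) (norm_nonneg _))
  have hnv : ‖toEuc v‖ ≠ 0 := by simpa [toEuc_eq_zero] using hv0
  have hnw : ‖toEuc w‖ ≠ 0 := by simpa [toEuc_eq_zero] using hw0
  have hcv : ((((‖toEuc v‖)⁻¹ : ℝ) : ℂ)) ≠ 0 := by
    simpa using inv_ne_zero hnv
  have hcw : ((((‖toEuc w‖)⁻¹ : ℝ) : ℂ)) ≠ 0 := by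
    simpa using inv_ne_zero hnw
  have key : ‖inprod ((((‖toEuc v‖)⁻¹ : ℝ) : ℂ) • v)
      (X.mulVec ((((‖toEuc w‖)⁻¹ : ℝ) : ℂ) • w))‖ ≤ SNorm k X := by
    apply le_csSup (SNorm_bddAbove k X)
    exact ⟨_, _, unitVec_normalize hv0, unitVec_normalize hw0,
      (SchmidtRank_smul hcv v).le.trans hv, (SchmidtRank_smul hcw w).le.trans hw, rfl⟩
  rw [Matrix.mulVec_smul, inprod_smul_left, inprod_smul_right, norm_mul,
    norm_mul] at key
  have h1 : ‖(starRingEnd ℂ) ((((‖toEuc v‖)⁻¹ : ℝ) : ℂ))‖ = (‖toEuc v‖)⁻¹ := by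
    simp [Complex.norm_of_nonneg (inv_nonneg.mpr (norm_nonneg _))]
  have h2 : ‖(((‖toEuc w‖)⁻¹ : ℝ) : ℂ)‖ = (‖toEuc w‖)⁻¹ := by
    simp [Complex.norm_of_nonneg (inv_nonneg.mpr (norm_nonneg _))]
  rw [h1, h2] at key
  have hpos : 0 < ‖toEuc v‖ * ‖toEuc w‖ := by
    have := (norm_nonneg (toEuc v)).lt_of_ne (Ne.symm hnv)
    have := (norm_nonneg (toEuc w)).lt_of_ne (Ne.symm hnw)
    positivity
  calc ‖inprod v (X.mulVec w)‖
      = (‖toEuc v‖ * ‖toEuc w‖) * ((‖toEuc v‖)⁻¹ * ((‖toEuc w‖)⁻¹ *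
          ‖inprod v (X.mulVec w)‖)) := by
        field_simp
    _ ≤ (‖toEuc v‖ * ‖toEuc w‖) * SNorm k X :=
        mul_le_mul_of_nonneg_left key hpos.le
    _ = SNorm k X * (‖toEuc v‖ * ‖toEuc w‖) := by ring


variable {J' : Type*} [Fintype J']

lemma kron_one_conjTranspose [DecidableEq I] (A : Matrix J' J ℂ) :
    ((1 : Matrix I I ℂ) ⊗ₖ A)ᴴ = (1 : Matrix I I ℂ) ⊗ₖ Aᴴ := by
  ext ⟨a, i⟩ ⟨b, j⟩
  simp only [Matrix.conjTranspose_apply, Matrix.kroneckerMap_apply, Matrix.one_apply]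
  rcases eq_or_ne b a with rfl | h
  · simp
  · simp [h, Ne.symm h]

lemma kron_one_mulVec [DecidableEq I] (A : Matrix J' J ℂ) (v : I × J → ℂ) (p : I × J') :
    (((1 : Matrix I I ℂ) ⊗ₖ A) *ᵥ v) p = ∑ s, A p.2 s * v (p.1, s) := by
  obtain ⟨a, i⟩ := p
  rw [Matrix.mulVec, dotProduct, Fintype.sum_prod_type]
  simp only [Matrix.kroneckerMap_apply, Matrix.one_apply]
  rw [Finset.sum_eq_single a]
  · simp
  · intro b _ hb
    simp [Ne.symm hb]
  · simp

lemma inprod_conjTranspose_mulVec (M : Matrix I J ℂ) (u : I → ℂ) (w : J → ℂ) :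
    inprod (Mᴴ.mulVec u) w = inprod u (M.mulVec w) := by
  simp only [inprod, Matrix.mulVec, dotProduct, Matrix.conjTranspose_apply, map_sum,
    _root_.map_mul, Finset.sum_mul, Finset.mul_sum, RingHomCompTriple.comp_apply,
    RingHom.id_apply, Complex.conj_conj]
  rw [Finset.sum_comm]
  exact Finset.sum_congr rfl fun i _ => Finset.sum_congr rfl fun j _ => by
    rw [← starRingEnd_apply, Complex.conj_conj]; ring

lemma schmidtRank_kron_mulVec [DecidableEq I] (N : Matrix J' J ℂ) (v : I × J → ℂ) :
    SchmidtRank (((1 : Matrix I I ℂ) ⊗ₖ N) *ᵥ v) ≤ Fintype.card J := by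
  unfold SchmidtRank
  have h : (Matrix.of fun a b => (((1 : Matrix I I ℂ) ⊗ₖ N) *ᵥ v) (a, b)) =
      (Matrix.of fun a s => v (a, s)) * Nᵀ := by
    ext a b
    rw [Matrix.of_apply, kron_one_mulVec]
    simp [Matrix.mul_apply, mul_comm]
  rw [h]
  exact (Matrix.rank_mul_le_left _ _).trans (Matrix.rank_le_card_width _)

lemma sum_mulVec {ι : Type*} (s : Finset ι) (M : ι → Matrix I J ℂ) (w : J → ℂ) :
    (∑ i ∈ s, M i) *ᵥ w = ∑ i ∈ s, (M i) *ᵥ w := by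
  ext j
  simp only [Matrix.mulVec, dotProduct, Finset.sum_apply, Matrix.sum_apply,
    Finset.sum_mul]
  rw [Finset.sum_comm]

lemma inprod_sum_right {ι : Type*} (s : Finset ι) (v : I → ℂ) (y : ι → I → ℂ) :
    inprod v (∑ i ∈ s, y i) = ∑ i ∈ s, inprod v (y i) := by
  simp only [inprod, Finset.sum_apply, Finset.mul_sum]
  rw [Finset.sum_comm]

lemma inprod_kron_one_self [DecidableEq I] (C : Matrix J J ℂ) (v : I × J → ℂ) :
    inprod v (((1 : Matrix I I ℂ) ⊗ₖ C) *ᵥ v)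
      = ∑ a : I, inprod (fun b => v (a, b)) (C *ᵥ fun b => v (a, b)) := by
  rw [inprod, Fintype.sum_prod_type]
  refine Finset.sum_congr rfl fun a _ => Finset.sum_congr rfl fun b _ => ?_
  rw [kron_one_mulVec]
  rfl

lemma inprod_self_prod (v : I × J → ℂ) :
    inprod v v = ∑ a : I, inprod (fun b => v (a, b)) (fun b => v (a, b)) := by
  rw [inprod, Fintype.sum_prod_type]
  rfl

lemma inprod_self_re (v : I → ℂ) : (inprod v v).re = ‖toEuc v‖ ^ 2 := by
  rw [inprod_eq_inner, @inner_self_eq_norm_sq_to_K ℂ]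
  norm_cast

lemma inprod_self_nonneg_re (v : I → ℂ) : 0 ≤ (inprod v v).re := by
  rw [inprod_self_re]; positivity

lemma abs_inprod_self (v : I → ℂ) : ‖inprod v v‖ = ‖toEuc v‖ ^ 2 := by
  rw [inprod_eq_inner, @inner_self_eq_norm_sq_to_K ℂ,
    ]
  norm_cast
  simp [abs_of_nonneg]


lemma kron_one_sum {L : Type*} [Fintype L] {ι : Type*} (s : Finset ι) (C : ι → Matrix J L ℂ)
    [DecidableEq I] :
    ∑ i ∈ s, ((1 : Matrix I I ℂ) ⊗ₖ C i) = (1 : Matrix I I ℂ) ⊗ₖ (∑ i ∈ s, C i) := by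
  ext ⟨a, b⟩ ⟨c, d⟩
  simp [Matrix.sum_apply, Finset.mul_sum]

lemma inprod_xx_eq {L : Type*} [Fintype L] [DecidableEq I] (A : Matrix J L ℂ) (v : I × J → ℂ) :
    inprod (((1 : Matrix I I ℂ) ⊗ₖ Aᴴ) *ᵥ v) (((1 : Matrix I I ℂ) ⊗ₖ Aᴴ) *ᵥ v)
      = inprod v (((1 : Matrix I I ℂ) ⊗ₖ (A * Aᴴ)) *ᵥ v) := by
  conv_lhs => rw [← kron_one_conjTranspose]
  rw [inprod_conjTranspose_mulVec, kron_one_conjTranspose, Matrix.mulVec_mulVec,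
    ← Matrix.mul_kronecker_mul, Matrix.one_mul]

lemma sum_sq_norm_le {L : Type*} [Fintype L] [DecidableEq I] {ι : Type*} (s : Finset ι)
    (A : ι → Matrix J L ℂ) {v : I × J → ℂ} (hv : UnitVec v)
    (hA : opNorm (∑ i ∈ s, A i * (A i)ᴴ) ≤ 1) :
    ∑ i ∈ s, ‖toEuc (((1 : Matrix I I ℂ) ⊗ₖ (A i)ᴴ) *ᵥ v)‖ ^ 2 ≤ 1 := by
  set C : Matrix J J ℂ := ∑ i ∈ s, A i * (A i)ᴴ with hC
  have h1 : ∑ i ∈ s, ‖toEuc (((1 : Matrix I I ℂ) ⊗ₖ (A i)ᴴ) *ᵥ v)‖ ^ 2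
      = (inprod v (((1 : Matrix I I ℂ) ⊗ₖ C) *ᵥ v)).re := by
    rw [hC, ← kron_one_sum, _root_.sum_mulVec, inprod_sum_right, Complex.re_sum]
    refine Finset.sum_congr rfl fun i _ => ?_
    rw [← inprod_xx_eq, inprod_self_re]
  rw [h1, inprod_kron_one_self, Complex.re_sum]
  have h2 : ∀ a : I, (inprod (fun b => v (a, b)) (C *ᵥ fun b => v (a, b))).re
      ≤ opNorm C * ‖toEuc (fun b => v (a, b))‖ ^ 2 := by
    intro a
    refine (Complex.re_le_norm _).trans ?_
    refine (abs_inprod_mulVec_le C _ _).trans (le_of_eq ?_)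
    ring
  refine (Finset.sum_le_sum fun a _ => h2 a).trans ?_
  rw [← Finset.mul_sum]
  have h3 : ∑ a : I, ‖toEuc (fun b => v (a, b))‖ ^ 2 = 1 := by
    calc ∑ a : I, ‖toEuc (fun b => v (a, b))‖ ^ 2
        = ∑ a : I, (inprod (fun b => v (a, b)) (fun b => v (a, b))).re :=
          Finset.sum_congr rfl fun a _ => (inprod_self_re _).symm
      _ = (∑ a : I, inprod (fun b => v (a, b)) (fun b => v (a, b))).re :=
          (Complex.re_sum _ _).symm
      _ = (inprod v v).re := by rw [← inprod_self_prod]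
      _ = 1 := by rw [hv, Complex.one_re]
  rw [h3, mul_one]
  exact hA


lemma dirA {m n k : ℕ} (X : Matrix (Fin m × Fin n) (Fin m × Fin n) ℂ)
    {N : ℕ} (A B : Fin N → Matrix (Fin k) (Fin n) ℂ)
    (hA : opNorm (∑ i, A i * (A i)ᴴ) ≤ 1) (hB : opNorm (∑ i, B i * (B i)ᴴ) ≤ 1) :
    opNorm (∑ i, ((1 : Matrix (Fin m) (Fin m) ℂ) ⊗ₖ A i) * X *
      (((1 : Matrix (Fin m) (Fin m) ℂ) ⊗ₖ B i)ᴴ)) ≤ SNorm k X := by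
  refine opNorm_le (SNorm_nonneg k X) ?_
  intro v w hv hw
  set x : Fin N → (Fin m × Fin n → ℂ) :=
    fun i => ((1 : Matrix (Fin m) (Fin m) ℂ) ⊗ₖ (A i)ᴴ) *ᵥ v with hx
  set y : Fin N → (Fin m × Fin n → ℂ) :=
    fun i => ((1 : Matrix (Fin m) (Fin m) ℂ) ⊗ₖ (B i)ᴴ) *ᵥ w with hy
  have hsum : inprod v ((∑ i, ((1 : Matrix (Fin m) (Fin m) ℂ) ⊗ₖ A i) * X *
      (((1 : Matrix (Fin m) (Fin m) ℂ) ⊗ₖ B i)ᴴ)) *ᵥ w) = ∑ i, inprod (x i) (X *ᵥ y i) := by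
    rw [_root_.sum_mulVec, inprod_sum_right]
    refine Finset.sum_congr rfl fun i _ => ?_
    rw [← Matrix.mulVec_mulVec, ← Matrix.mulVec_mulVec,
      ← inprod_conjTranspose_mulVec ((1 : Matrix (Fin m) (Fin m) ℂ) ⊗ₖ A i),
      kron_one_conjTranspose, kron_one_conjTranspose]
  rw [hsum]
  have hxk : ∀ i, SchmidtRank (x i) ≤ k := fun i => by
    rw [hx]
    simpa using schmidtRank_kron_mulVec (A i)ᴴ v
  have hyk : ∀ i, SchmidtRank (y i) ≤ k := fun i => by
    rw [hy]
    simpa using schmidtRank_kron_mulVec (B i)ᴴ w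
  calc ‖∑ i, inprod (x i) (X *ᵥ y i)‖
      ≤ ∑ i, ‖inprod (x i) (X *ᵥ y i)‖ := norm_sum_le _ _
    _ ≤ ∑ i, SNorm k X * (‖toEuc (x i)‖ * ‖toEuc (y i)‖) :=
        Finset.sum_le_sum fun i _ => abs_inprod_mulVec_le_SNorm X (hxk i) (hyk i)
    _ = SNorm k X * ∑ i, ‖toEuc (x i)‖ * ‖toEuc (y i)‖ := by rw [Finset.mul_sum]
    _ ≤ SNorm k X * 1 := by
        refine mul_le_mul_of_nonneg_left ?_ (SNorm_nonneg k X)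
        calc ∑ i, ‖toEuc (x i)‖ * ‖toEuc (y i)‖
            ≤ ∑ i, (‖toEuc (x i)‖ ^ 2 + ‖toEuc (y i)‖ ^ 2) / 2 :=
              Finset.sum_le_sum fun i _ => by nlinarith [sq_nonneg (‖toEuc (x i)‖ - ‖toEuc (y i)‖)]
          _ = ((∑ i, ‖toEuc (x i)‖ ^ 2) + ∑ i, ‖toEuc (y i)‖ ^ 2) / 2 := by
              rw [← Finset.sum_add_distrib, Finset.sum_div]
          _ ≤ (1 + 1) / 2 := by
              have h1 := sum_sq_norm_le Finset.univ A hv hA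
              have h2 := sum_sq_norm_le Finset.univ B hw hB
              simp only [hx, hy]
              linarith
          _ = 1 := by norm_num
    _ = SNorm k X := mul_one _


lemma inprod_sum_left {ι : Type*} (s : Finset ι) (y : ι → I → ℂ) (v : I → ℂ) :
    inprod (∑ i ∈ s, y i) v = ∑ i ∈ s, inprod (y i) v := by
  simp only [inprod, Finset.sum_apply, map_sum, Finset.sum_mul]
  rw [Finset.sum_comm]

lemma sum_fin_of_le {M : Type*} [AddCommMonoid M] {k d : ℕ} (hd : d ≤ k) (f : Fin k → M)
    (hf : ∀ s : Fin k, d ≤ (s : ℕ) → f s = 0) :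
    ∑ s, f s = ∑ i : Fin d, f (Fin.castLE hd i) := by
  have hrfl : ∑ i : Fin d, f (Fin.castLE hd i) = ∑ i : Fin d, f (Fin.castLEEmb hd i) := rfl
  rw [hrfl, ← Finset.sum_map Finset.univ (Fin.castLEEmb hd) f]
  refine (Finset.sum_subset (Finset.subset_univ _) fun s _ hs => hf s ?_).symm
  by_contra hlt
  push_neg at hlt
  exact hs (Finset.mem_map.mpr ⟨⟨(s : ℕ), hlt⟩, Finset.mem_univ _, Fin.ext rfl⟩)

/-- Existence of a "projection family": an orthonormal-ish family of `k` vectors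
spanning a given subspace of dimension at most `k` (padded with zeros). -/
lemma exists_q_family {n k : ℕ} (W : Submodule ℂ (Fin n → ℂ))
    (hW : Module.finrank ℂ W ≤ k) :
    ∃ (q : Fin k → (Fin n → ℂ)) (d : ℕ),
      (∀ s t : Fin k, inprod (q s) (q t) = if s = t ∧ (s : ℕ) < d then 1 else 0) ∧
      (∀ u : Fin n → ℂ, u ∈ W → ∑ s : Fin k, inprod (q s) u • q s = u) := by
  classical
  let eqv : (Fin n → ℂ) ≃ₗ[ℂ] EuclideanSpace ℂ (Fin n) :=
    (WithLp.linearEquiv 2 ℂ (Fin n → ℂ)).symm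
  let W' : Submodule ℂ (EuclideanSpace ℂ (Fin n)) := W.map eqv.toLinearMap
  have hW' : Module.finrank ℂ W' ≤ k := by
    rw [LinearEquiv.finrank_map_eq eqv W]
    exact hW
  set d := Module.finrank ℂ W' with hdd
  let b := stdOrthonormalBasis ℂ W'
  let q : Fin k → EuclideanSpace ℂ (Fin n) :=
    fun s => if h : (s : ℕ) < d then (b ⟨(s : ℕ), h⟩ : EuclideanSpace ℂ (Fin n)) else 0
  refine ⟨fun s => eqv.symm (q s), d, ?_, ?_⟩
  · intro s t
    have h1 : inprod (eqv.symm (q s)) (eqv.symm (q t))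
        = @inner ℂ (EuclideanSpace ℂ (Fin n)) _ (q s) (q t) := by
      rw [inprod_eq_inner]; rfl
    rw [h1]
    by_cases hs : (s : ℕ) < d
    · by_cases ht : (t : ℕ) < d
      · have := orthonormal_iff_ite.mp b.orthonormal ⟨(s : ℕ), hs⟩ ⟨(t : ℕ), ht⟩
        rw [Submodule.coe_inner] at this
        simp only [q, dif_pos hs, dif_pos ht]
        rw [this]
        by_cases hst : s = t
        · subst hst; simp [hs]
        · have : (⟨(s : ℕ), hs⟩ : Fin d) ≠ ⟨(t : ℕ), ht⟩ := by
            intro h; exact hst (Fin.ext (congrArg (fun x : Fin d => (x : ℕ)) h))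
          simp [this, hst]
      · simp only [q, dif_neg ht]
        rw [inner_zero_right]
        have : ¬ (s = t ∧ (s : ℕ) < d) := by
          rintro ⟨rfl, h⟩; exact ht h
        rw [if_neg this]
    · simp only [q, dif_neg hs]
      rw [inner_zero_left]
      have : ¬ (s = t ∧ (s : ℕ) < d) := by rintro ⟨_, h⟩; exact hs h
      rw [if_neg this]
  · intro u hu
    have hmem : eqv u ∈ W' := ⟨u, hu, rfl⟩
    have hrep := b.sum_repr' ⟨eqv u, hmem⟩
    have hcoe : ∑ i : Fin d, (@inner ℂ (EuclideanSpace ℂ (Fin n)) _ ((b i : EuclideanSpace ℂ (Fin n))) (eqv u)) • (b i : EuclideanSpace ℂ (Fin n)) = eqv u := by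
      have := congrArg (Submodule.subtype W') hrep
      simpa [map_sum, Submodule.coe_inner] using this
    have hsum : ∑ s : Fin k, (@inner ℂ (EuclideanSpace ℂ (Fin n)) _ (q s) (eqv u)) • q s
        = eqv u := by
      rw [sum_fin_of_le (hdd ▸ hW') (fun s => (@inner ℂ (EuclideanSpace ℂ (Fin n)) _ (q s) (eqv u)) • q s)
        (fun s hs => by simp only [q]; rw [dif_neg (show ¬ ((s : ℕ) < d) from not_lt.mpr hs)]; simp)]
      refine Eq.trans (Finset.sum_congr rfl fun i _ => ?_) hcoe
      have hq : q (Fin.castLE (hdd ▸ hW') i) = (b i : EuclideanSpace ℂ (Fin n)) := by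
        have hlt : ((Fin.castLE (hdd ▸ hW') i : Fin k) : ℕ) < d := i.isLt
        simp only [q, dif_pos hlt]
        exact congrArg (fun z => ((b z : W') : EuclideanSpace ℂ (Fin n))) (Fin.ext rfl)
      rw [hq]
    have hfin := congrArg eqv.symm hsum
    rw [map_sum] at hfin
    simp only [_root_.map_smul] at hfin
    rw [LinearEquiv.symm_apply_apply] at hfin
    refine Eq.trans (Finset.sum_congr rfl fun s _ => ?_) hfin
    have h : inprod (eqv.symm (q s)) u
        = @inner ℂ (EuclideanSpace ℂ (Fin n)) _ (q s) (eqv u) := by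
      rw [inprod_eq_inner]
      rfl
    rw [h]


lemma trunc_norm_le {k d : ℕ} (u : Fin k → ℂ) (hu : UnitVec u) :
    ‖toEuc (fun s : Fin k => if (s : ℕ) < d then u s else 0)‖ ≤ 1 := by
  have h2 : ‖toEuc (fun s : Fin k => if (s : ℕ) < d then u s else 0)‖ ^ 2 ≤ 1 := by
    rw [← inprod_self_re]
    have h3 : (inprod u u).re = 1 := by rw [hu]; exact Complex.one_re
    rw [← h3, inprod, inprod, Complex.re_sum, Complex.re_sum]
    refine Finset.sum_le_sum fun s _ => ?_
    by_cases hs : (s : ℕ) < d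
    · simp [hs]
    · simp only [hs, if_false, mul_zero, Complex.zero_re]
      rw [mul_comm, Complex.mul_conj, Complex.ofReal_re]
      exact Complex.normSq_nonneg _
  nlinarith [norm_nonneg (toEuc (fun s : Fin k => if (s : ℕ) < d then u s else 0))]

lemma dirB_construct {m n k : ℕ} {v : Fin m × Fin n → ℂ}
    (hv : UnitVec v) (hr : SchmidtRank v ≤ k) :
    ∃ (A : Matrix (Fin k) (Fin n) ℂ) (v' : Fin m × Fin k → ℂ),
      UnitVec v' ∧ opNorm (A * Aᴴ) ≤ 1 ∧
      ((1 : Matrix (Fin m) (Fin m) ℂ) ⊗ₖ Aᴴ) *ᵥ v' = v := by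
  classical
  set M : Matrix (Fin m) (Fin n) ℂ := Matrix.of fun i j => v (i, j) with hM
  set W : Submodule ℂ (Fin n → ℂ) := LinearMap.range (Mᵀ.mulVecLin) with hWdef
  have hW : Module.finrank ℂ W ≤ k := by
    have : Module.finrank ℂ W = Mᵀ.rank := rfl
    rw [this, Matrix.rank_transpose]
    exact hr
  obtain ⟨q, d, hq1, hq2⟩ := exists_q_family W hW
  have hrow : ∀ a : Fin m, (fun j => v (a, j)) ∈ W := by
    intro a
    refine ⟨Pi.single a 1, ?_⟩
    ext j
    simp only [Matrix.mulVecLin_apply, Matrix.mulVec, dotProduct,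
      Matrix.transpose_apply, hM, Matrix.of_apply, Pi.single_apply]
    rw [Finset.sum_eq_single a] <;> simp +contextual
  set A : Matrix (Fin k) (Fin n) ℂ := Matrix.of fun s j => (starRingEnd ℂ) (q s j) with hA
  set v' : Fin m × Fin k → ℂ := fun p => inprod (q p.2) (fun j => v (p.1, j)) with hv'
  have hAH : ∀ (j : Fin n) (s : Fin k), Aᴴ j s = q s j := by
    intro j s
    simp [hA, Matrix.conjTranspose_apply]
  have hC1 : ((1 : Matrix (Fin m) (Fin m) ℂ) ⊗ₖ Aᴴ) *ᵥ v' = v := by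
    funext p
    obtain ⟨a, j⟩ := p
    rw [kron_one_mulVec]
    have hexp := hq2 (fun j => v (a, j)) (hrow a)
    have happ := congrFun hexp j
    rw [Finset.sum_apply] at happ
    simp only [Pi.smul_apply, smul_eq_mul] at happ
    calc ∑ s, Aᴴ j s * v' (a, s)
        = ∑ s, inprod (q s) (fun j => v (a, j)) * q s j := by
          refine Finset.sum_congr rfl fun s _ => ?_
          rw [hAH]
          simp only [hv']
          ring
      _ = v (a, j) := happ
  have hkey : ∀ a : Fin m, ∑ s, (starRingEnd ℂ) (v' (a, s)) * v' (a, s)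
      = inprod (fun j => v (a, j)) (fun j => v (a, j)) := by
    intro a
    have hrepr := hq2 (fun j => v (a, j)) (hrow a)
    calc ∑ s, (starRingEnd ℂ) (v' (a, s)) * v' (a, s)
        = ∑ s, inprod ((inprod (q s) fun j => v (a, j)) • q s) (fun j => v (a, j)) := by
          refine Finset.sum_congr rfl fun s _ => ?_
          rw [inprod_smul_left]
      _ = inprod (∑ s, (inprod (q s) fun j => v (a, j)) • q s) (fun j => v (a, j)) :=
          (inprod_sum_left _ _ _).symm
      _ = inprod (fun j => v (a, j)) (fun j => v (a, j)) := by rw [hrepr]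
  have hC2 : UnitVec v' := by
    rw [UnitVec, inprod, Fintype.sum_prod_type]
    calc ∑ a, ∑ s, (starRingEnd ℂ) (v' (a, s)) * v' (a, s)
        = ∑ a, inprod (fun j => v (a, j)) (fun j => v (a, j)) :=
          Finset.sum_congr rfl fun a _ => hkey a
      _ = inprod v v := (inprod_self_prod v).symm
      _ = 1 := hv
  have hAA : ∀ s t : Fin k, (A * Aᴴ) s t = if s = t ∧ (s : ℕ) < d then 1 else 0 := by
    intro s t
    have : (A * Aᴴ) s t = inprod (q s) (q t) := by
      rw [Matrix.mul_apply, inprod]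
      refine Finset.sum_congr rfl fun j _ => ?_
      rw [hAH, hA]
      simp only [Matrix.of_apply]
    rw [this, hq1]
  have hC3 : opNorm (A * Aᴴ) ≤ 1 := by
    refine opNorm_le zero_le_one ?_
    intro u w hu hw
    have hmul : ∀ s : Fin k, ((A * Aᴴ) *ᵥ w) s = if (s : ℕ) < d then w s else 0 := by
      intro s
      rw [Matrix.mulVec, dotProduct]
      simp only [hAA]
      by_cases hs : (s : ℕ) < d
      · rw [if_pos hs, Finset.sum_eq_single s]
        · simp [hs]
        · intro t _ hts
          rw [if_neg (fun h => hts h.1.symm), zero_mul]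
        · simp
      · rw [if_neg hs]
        refine Finset.sum_eq_zero fun t _ => ?_
        rw [if_neg (fun h => hs h.2), zero_mul]
    have heq : inprod u ((A * Aᴴ) *ᵥ w)
        = inprod (fun s : Fin k => if (s : ℕ) < d then u s else 0)
            (fun s : Fin k => if (s : ℕ) < d then w s else 0) := by
      rw [inprod, inprod]
      refine Finset.sum_congr rfl fun s _ => ?_
      rw [hmul]
      by_cases hs : (s : ℕ) < d <;> simp [hs]
    rw [heq]
    calc ‖inprod _ _‖
        ≤ ‖toEuc (fun s : Fin k => if (s : ℕ) < d then u s else 0)‖ *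
          ‖toEuc (fun s : Fin k => if (s : ℕ) < d then w s else 0)‖ := abs_inprod_le _ _
      _ ≤ 1 * 1 := mul_le_mul (trunc_norm_le u hu) (trunc_norm_le w hw)
            (norm_nonneg _) zero_le_one
      _ = 1 := one_mul 1
  exact ⟨A, v', hC2, hC3, hC1⟩


lemma opNorm_zero_le_one : opNorm (0 : Matrix I J ℂ) ≤ 1 :=
  opNorm_le zero_le_one fun v w _ _ => by simp [inprod, Matrix.zero_mulVec]

end

end AuxKMinimal

/-- Theorem 3.1: the `k`-minimal operator space norm on `M_m(M_n)` equals the `S(k)`-norm. -/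
theorem kMinimal_norm_eq_SNorm (m n k : ℕ) (hm : 0 < m) (hn : 0 < n) (hk : 0 < k) (hkn : k ≤ n)
    (X : Matrix (Fin m × Fin n) (Fin m × Fin n) ℂ) :
    sSup { t : ℝ | ∃ (N : ℕ) (A B : Fin N → Matrix (Fin k) (Fin n) ℂ),
        opNorm (∑ i, A i * (A i)ᴴ) ≤ 1 ∧ opNorm (∑ i, B i * (B i)ᴴ) ≤ 1 ∧
        t = opNorm (∑ i, ((1 : Matrix (Fin m) (Fin m) ℂ) ⊗ₖ A i) * X *
          (((1 : Matrix (Fin m) (Fin m) ℂ) ⊗ₖ B i)ᴴ)) }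
      = SNorm k X := by
  have hbdd : BddAbove { t : ℝ | ∃ (N : ℕ) (A B : Fin N → Matrix (Fin k) (Fin n) ℂ),
      opNorm (∑ i, A i * (A i)ᴴ) ≤ 1 ∧ opNorm (∑ i, B i * (B i)ᴴ) ≤ 1 ∧
      t = opNorm (∑ i, ((1 : Matrix (Fin m) (Fin m) ℂ) ⊗ₖ A i) * X *
        (((1 : Matrix (Fin m) (Fin m) ℂ) ⊗ₖ B i)ᴴ)) } := by
    refine ⟨SNorm k X, ?_⟩
    rintro t ⟨N, A, B, hA, hB, rfl⟩
    exact dirA X A B hA hB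
  have hmem0 : opNorm (∑ i : Fin 0, ((1 : Matrix (Fin m) (Fin m) ℂ) ⊗ₖ (fun _ : Fin 0 =>
      (0 : Matrix (Fin k) (Fin n) ℂ)) i) * X *
      (((1 : Matrix (Fin m) (Fin m) ℂ) ⊗ₖ (fun _ : Fin 0 =>
      (0 : Matrix (Fin k) (Fin n) ℂ)) i)ᴴ)) ∈
      { t : ℝ | ∃ (N : ℕ) (A B : Fin N → Matrix (Fin k) (Fin n) ℂ),
      opNorm (∑ i, A i * (A i)ᴴ) ≤ 1 ∧ opNorm (∑ i, B i * (B i)ᴴ) ≤ 1 ∧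
      t = opNorm (∑ i, ((1 : Matrix (Fin m) (Fin m) ℂ) ⊗ₖ A i) * X *
        (((1 : Matrix (Fin m) (Fin m) ℂ) ⊗ₖ B i)ᴴ)) } := by
    refine ⟨0, _, _, ?_, ?_, rfl⟩ <;>
      simpa using opNorm_zero_le_one
  apply le_antisymm
  · refine Real.sSup_le ?_ (SNorm_nonneg k X)
    rintro t ⟨N, A, B, hA, hB, rfl⟩
    exact dirA X A B hA hB
  · refine Real.sSup_le ?_ ((opNorm_nonneg _).trans (le_csSup hbdd hmem0))
    rintro t ⟨v, w, hv, hw, hrv, hrw, rfl⟩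
    obtain ⟨A, v', hv', hA1, hA2⟩ := dirB_construct hv hrv
    obtain ⟨B, w', hw', hB1, hB2⟩ := dirB_construct hw hrw
    set Y : Matrix (Fin m × Fin k) (Fin m × Fin k) ℂ :=
      ((1 : Matrix (Fin m) (Fin m) ℂ) ⊗ₖ A) * X *
        (((1 : Matrix (Fin m) (Fin m) ℂ) ⊗ₖ B)ᴴ) with hY
    have hval : inprod v' (Y *ᵥ w') = inprod v (X *ᵥ w) := by
      rw [hY, ← Matrix.mulVec_mulVec, ← Matrix.mulVec_mulVec,
        ← inprod_conjTranspose_mulVec ((1 : Matrix (Fin m) (Fin m) ℂ) ⊗ₖ A),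
        kron_one_conjTranspose, kron_one_conjTranspose, hA2, hB2]
    have h1 : ‖inprod v (X *ᵥ w)‖ ≤ opNorm Y := by
      rw [← hval]
      have h2 := abs_inprod_mulVec_le Y v' w'
      rw [(unitVec_iff v').mp hv', (unitVec_iff w').mp hw'] at h2
      simpa using h2
    refine h1.trans (le_csSup hbdd ?_)
    refine ⟨1, fun _ => A, fun _ => B, ?_, ?_, ?_⟩
    · simpa [Fin.sum_univ_one] using hA1
    · simpa [Fin.sum_univ_one] using hB1
    · rw [Fin.sum_univ_one]
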